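/- Test-function characterization of causality: A plan γ ∈ Π(μ,ν) is causal if and only if for every t ∈ {1,…,N}, every h_t ∈ C_b(ℝ^t) and every g_t ∈ C_b(ℝ^N), one has ∫ h_t(y₁,…,y_t) [ g_t(x₁,…,x_N) − ∫ g_t(x₁,…,x_t, x̃_{t+1},…,x̃_N) μ^{x₁,…,x_t}(dx̃_{t+1},…,dx̃_N) ] dγ = 0. -/

import Mathlib

open MeasureTheory ProbabilityTheory Set Filter
open scoped ENNReal NNReal BoundedContinuousFunction

noncomputable section

namespace CausalTransport

/-- The path space of a real-valued process in `N` time steps. -/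
abbrev Path (N : ℕ) := Fin N → ℝ

/-- Truncation of a path to its first `t` coordinates. -/
def proj (N t : ℕ) (x : Path N) : Fin t → ℝ :=
  fun i => if h : (i : ℕ) < N then x ⟨i, h⟩ else 0

/-- The coordinate with (0-based) index `t`, with junk value `0` if `t ≥ N`. -/
def coord (N t : ℕ) (x : Path N) : ℝ := if h : t < N then x ⟨t, h⟩ else 0

/-- The coordinates of a path after time `t`. -/
def tailProj (N t : ℕ) (x : Path N) : Fin (N - t) → ℝ := fun i => coord N (t + i) x

/-- Extension of a history of length `t` by one further value. -/
def snocFun (t : ℕ) (xs : Fin t → ℝ) (r : ℝ) : Fin (t + 1) → ℝ :=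
  fun i => if h : (i : ℕ) < t then xs ⟨i, h⟩ else r

/-- Extension of a history of length `t` to a full path (by `0`). -/
def pad (N t : ℕ) (xs : Fin t → ℝ) : Path N :=
  fun i => if h : (i : ℕ) < t then xs ⟨i, h⟩ else 0

/-- Glue the first `t` coordinates of `x` with the later coordinates `z`. -/
def glue (N t : ℕ) (x : Path N) (z : Fin (N - t) → ℝ) : Path N :=
  fun i => if (i : ℕ) < t then x i else
    if h : (i : ℕ) - t < N - t then z ⟨(i : ℕ) - t, h⟩ else 0

/-- Truncation of a pair of paths to the first `t` coordinates of each. -/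
def pairProj (N t : ℕ) (p : Path N × Path N) : (Fin t → ℝ) × (Fin t → ℝ) :=
  (proj N t p.1, proj N t p.2)

/-- The σ-algebra on path space generated by the first `t` coordinates. -/
def filt (N t : ℕ) : MeasurableSpace (Path N) :=
  MeasurableSpace.comap (proj N t) inferInstance

/-- `γ` is a transport plan (coupling) between `μ` and `ν`. -/
def IsCoupling {α β : Type*} [MeasurableSpace α] [MeasurableSpace β]
    (μ : Measure α) (ν : Measure β) (γ : Measure (α × β)) : Prop :=
  γ.map Prod.fst = μ ∧ γ.map Prod.snd = ν

/-- `γ` is a causal transport plan between `μ` and `ν`: it is a coupling and, for any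
disintegration `K` of `γ` over its first coordinate and any `t ∈ {1,…,N}`, the map
`x ↦ K x B` is measurable for the σ-algebra of the first `t` coordinates (up to `μ`-null
sets) whenever `B` is measurable for the first `t` coordinates. -/
def IsCausal (N : ℕ) (μ ν : Measure (Path N)) (γ : Measure (Path N × Path N)) : Prop :=
  IsCoupling μ ν γ ∧
  ∀ K : Kernel (Path N) (Path N), IsSFiniteKernel K → μ ⊗ₘ K = γ →
    ∀ t : ℕ, 1 ≤ t → t ≤ N → ∀ B : Set (Path N), MeasurableSet[filt N t] B →
      ∃ g : Path N → ℝ≥0∞, Measurable[filt N t] g ∧ (fun x => K x B) =ᵐ[μ] g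

/-- `γ` is a bicausal transport plan between `μ` and `ν`. -/
def IsBicausal (N : ℕ) (μ ν : Measure (Path N)) (γ : Measure (Path N × Path N)) : Prop :=
  IsCausal N μ ν γ ∧ IsCausal N ν μ (γ.map Prod.swap)

/-- Regular conditional distribution, under `μ`, of the coordinate of index `t`
given the first `t` coordinates. -/
def nextK (N : ℕ) (μ : Measure (Path N)) [IsFiniteMeasure μ] (t : ℕ) :
    Kernel (Fin t → ℝ) ℝ :=
  (μ.map (fun x => (proj N t x, coord N t x))).condKernel

/-- Regular conditional distribution, under `μ`, of all the coordinates after time `t`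
given the first `t` coordinates. -/
def tailK (N : ℕ) (μ : Measure (Path N)) [IsFiniteMeasure μ] (t : ℕ) :
    Kernel (Fin t → ℝ) (Fin (N - t) → ℝ) :=
  (μ.map (fun x => (proj N t x, tailProj N t x))).condKernel

/-- Regular conditional distribution, under `γ`, of the pair of coordinates of index `t`
given the first `t` coordinates of both paths. -/
def stepK (N : ℕ) (γ : Measure (Path N × Path N)) [IsFiniteMeasure γ] (t : ℕ) :
    Kernel ((Fin t → ℝ) × (Fin t → ℝ)) (ℝ × ℝ) :=
  (γ.map (fun p => (pairProj N t p, (coord N t p.1, coord N t p.2)))).condKernel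

/-- Regular conditional distribution, under `μ`, of the coordinate of index `t` given the
single coordinate of index `t-1` (one-step Markov transition kernel). -/
def mstep (N : ℕ) (μ : Measure (Path N)) [IsFiniteMeasure μ] (t : ℕ) : Kernel ℝ ℝ :=
  (μ.map (fun x => (coord N (t - 1) x, coord N t x))).condKernel

/-- `μ` is a Markov measure. -/
def IsMarkovMeasure (N : ℕ) (μ : Measure (Path N)) [IsFiniteMeasure μ] : Prop :=
  ∀ (t : ℕ) (ht : 1 ≤ t) (_ : t < N),
    ∀ᵐ xs ∂(μ.map (proj N t)), nextK N μ t xs = mstep N μ t (xs ⟨t - 1, by omega⟩)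

/-- A causal plan is causal quasi-Markov if (every version of) the conditional law of
`(x_{t+1}, y_{t+1})` given `(x_1,…,x_t,y_1,…,y_t)` depends a.s. only on `(x_t, y_1,…,y_t)`. -/
def IsQuasiMarkov (N : ℕ) (γ : Measure (Path N × Path N)) : Prop :=
  ∀ (t : ℕ) (ht : 1 ≤ t) (_ : t < N),
    ∀ S : Kernel ((Fin t → ℝ) × (Fin t → ℝ)) (ℝ × ℝ), IsSFiniteKernel S →
      (γ.map (pairProj N t)) ⊗ₘ S
          = γ.map (fun p => (pairProj N t p, (coord N t p.1, coord N t p.2))) →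
      ∃ κ : Kernel (ℝ × (Fin t → ℝ)) (ℝ × ℝ),
        ∀ᵐ z ∂(γ.map (pairProj N t)), S z = κ (z.1 ⟨t - 1, by omega⟩, z.2)

/-- Topological support of a measure. -/
def msupport {α : Type*} [TopologicalSpace α] [MeasurableSpace α] (μ : Measure α) : Set α :=
  {x | ∀ U : Set α, IsOpen U → x ∈ U → μ U ≠ 0}

/-- `K` is a version of the disintegration of `μ` at time `t` which is weakly continuous on
the support of the first `t` coordinates of `μ`. -/
def WeaklyContinuousDisintegration (N t : ℕ) (μ : Measure (Path N))
    (K : Kernel (Fin t → ℝ) (Fin (N - t) → ℝ)) : Prop :=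
  IsMarkovKernel K ∧
  (μ.map (proj N t)) ⊗ₘ K = μ.map (fun x => (proj N t x, tailProj N t x)) ∧
  ∀ f : (Fin (N - t) → ℝ) →ᵇ ℝ,
    ContinuousOn (fun xs => ∫ z, f z ∂(K xs)) (msupport (μ.map (proj N t)))

/-- `μ` is successively weakly continuous. -/
def SuccWeakCont (N : ℕ) (μ : Measure (Path N)) : Prop :=
  ∀ t : ℕ, t < N → ∃ K : Kernel (Fin t → ℝ) (Fin (N - t) → ℝ),
    WeaklyContinuousDisintegration N t μ K

/-- The cumulative distribution function of a measure on `ℝ`. -/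
def cdf1 (η : Measure ℝ) (z : ℝ) : ℝ := (η (Iic z)).toReal

/-- The left-continuous generalized inverse (quantile function) of the c.d.f. of `η`. -/
def qinv (η : Measure ℝ) (u : ℝ) : ℝ := sInf {y : ℝ | u ≤ cdf1 η y}

/-- Partial Knothe–Rosenblatt path built from the "uniform" inputs `u`. -/
def krPartial (N : ℕ) (μ : Measure (Path N)) [IsFiniteMeasure μ] (u : ℕ → ℝ) :
    (t : ℕ) → Fin t → ℝ
  | 0 => Fin.elim0
  | t + 1 => snocFun t (krPartial N μ u t)
      (qinv (nextK N μ t (krPartial N μ u t)) (u t))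

/-- The Knothe–Rosenblatt (quantile transform) path built from uniform inputs. -/
def krPath (N : ℕ) (μ : Measure (Path N)) [IsFiniteMeasure μ] (u : Path N) : Path N :=
  krPartial N μ (fun n => if h : n < N then u ⟨n, h⟩ else 0) N

/-- The uniform distribution on `[0,1]`. -/
def unif01 : Measure ℝ := volume.restrict (Icc (0 : ℝ) 1)

instance : IsProbabilityMeasure unif01 := by
  constructor
  simp [unif01, Real.volume_Icc]

/-- N independent uniforms on `[0,1]`. -/
def uniformCube (N : ℕ) : Measure (Path N) := Measure.pi fun _ => unif01

instance (N : ℕ) : IsProbabilityMeasure (uniformCube N) :=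
  inferInstanceAs (IsProbabilityMeasure (Measure.pi fun _ : Fin N => unif01))

/-- The (increasing) Knothe–Rosenblatt rearrangement of `(μ, ν)`: the joint law of
`(X*, Y*)` where both paths are built from the same independent uniforms. -/
def krCoupling (N : ℕ) (μ ν : Measure (Path N)) [IsFiniteMeasure μ] [IsFiniteMeasure ν] :
    Measure (Path N × Path N) :=
  (uniformCube N).map (fun u => (krPath N μ u, krPath N ν u))

/-- Partial Knothe–Rosenblatt Monge map. -/
def krMapPartial (N : ℕ) (μ ν : Measure (Path N)) [IsFiniteMeasure μ] [IsFiniteMeasure ν]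
    (x : Path N) : (t : ℕ) → Fin t → ℝ
  | 0 => Fin.elim0
  | t + 1 => snocFun t (krMapPartial N μ ν x t)
      (qinv (nextK N ν t (krMapPartial N μ ν x t))
        (cdf1 (nextK N μ t (proj N t x)) (coord N t x)))

/-- The Knothe–Rosenblatt Monge map from `μ` to `ν`. -/
def krMap (N : ℕ) (μ ν : Measure (Path N)) [IsFiniteMeasure μ] [IsFiniteMeasure ν]
    (x : Path N) : Path N :=
  krMapPartial N μ ν x N

open Classical in
/-- Relative entropy `Ent(ν|μ)`, via the nonnegative integrand `f log f - f + 1`,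
`f = dν/dμ`; equals `∫ log (dν/dμ) dν` for probability measures. -/
def relEnt {α : Type*} [MeasurableSpace α] (ν μ : Measure α) : ℝ≥0∞ :=
  if ν ≪ μ then
    ∫⁻ x, ENNReal.ofReal
      ((ν.rnDeriv μ x).toReal * Real.log (ν.rnDeriv μ x).toReal
        - (ν.rnDeriv μ x).toReal + 1) ∂μ
  else ∞

/-- Universally measurable `ℝ≥0∞`-valued function. -/
def UnivMeasurable {α : Type*} [MeasurableSpace α] (f : α → ℝ≥0∞) : Prop :=
  ∀ P : Measure α, IsFiniteMeasure P → AEMeasurable f P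

-- new material
def glueF (N t : ℕ) (xs : Fin t → ℝ) (z : Fin (N - t) → ℝ) : Path N :=
  fun i => if h : (i : ℕ) < t then xs ⟨i, h⟩ else
    if h2 : (i : ℕ) - t < N - t then z ⟨(i : ℕ) - t, h2⟩ else 0

lemma measurable_proj (N t : ℕ) : Measurable (proj N t) := by
  apply measurable_pi_iff.mpr; intro i
  unfold proj; split
  · exact measurable_pi_apply _
  · exact measurable_const

lemma measurable_coord (N t : ℕ) : Measurable (coord N t) := by
  unfold coord; split
  · exact measurable_pi_apply _
  · exact measurable_const

lemma measurable_tailProj (N t : ℕ) : Measurable (tailProj N t) := by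
  apply measurable_pi_iff.mpr; intro i
  exact measurable_coord N _

lemma measurable_pad (N t : ℕ) : Measurable (pad N t) := by
  apply measurable_pi_iff.mpr; intro i
  unfold pad; split
  · exact measurable_pi_apply _
  · exact measurable_const

lemma measurable_glueF (N t : ℕ) :
    Measurable (fun q : (Fin t → ℝ) × (Fin (N - t) → ℝ) => glueF N t q.1 q.2) := by
  apply measurable_pi_iff.mpr; intro i
  unfold glueF; split
  · exact (measurable_pi_apply _).comp measurable_fst
  · split
    · exact (measurable_pi_apply _).comp measurable_snd
    · exact measurable_const

lemma glue_eq (N t : ℕ) (x : Path N) (z : Fin (N - t) → ℝ) :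
    glue N t x z = glueF N t (proj N t x) z := by
  funext i
  simp only [glue, glueF, proj]
  by_cases h : (i : ℕ) < t
  · simp [h, i.isLt]
  · simp [h]

lemma glueF_proj_tailProj (N t : ℕ) (x : Path N) :
    glueF N t (proj N t x) (tailProj N t x) = x := by
  funext i
  simp only [glueF, proj, tailProj, coord]
  by_cases h : (i : ℕ) < t
  · simp [h, i.isLt]
  · have h2 : (i : ℕ) - t < N - t := by omega
    have h3 : t + ((i : ℕ) - t) < N := by omega
    rw [dif_neg h, dif_pos h2, dif_pos h3]
    congr 1
    exact Fin.ext (by simp; omega)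

lemma proj_pad (N t : ℕ) (ht : t ≤ N) (xs : Fin t → ℝ) : proj N t (pad N t xs) = xs := by
  funext i
  have : (i : ℕ) < N := lt_of_lt_of_le i.isLt ht
  simp [proj, pad, this, i.isLt]

lemma filt_le (N t : ℕ) : filt N t ≤ (inferInstance : MeasurableSpace (Path N)) := by
  unfold filt
  rw [← measurable_iff_comap_le]; exact measurable_proj N t

lemma measurable_filt_proj (N t : ℕ) : Measurable[filt N t] (proj N t) :=
  fun s hs => MeasurableSpace.measurableSet_comap.mpr ⟨s, hs, rfl⟩

lemma measurable_comp_proj {β : Type*} [MeasurableSpace β] (N t : ℕ) {ψ : (Fin t → ℝ) → β}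
    (hψ : Measurable ψ) : Measurable[filt N t] (fun x => ψ (proj N t x)) :=
  hψ.comp (measurable_filt_proj N t)

lemma exists_factor {β : Type*} [MeasurableSpace β] [MeasurableSingletonClass β]
    (N t : ℕ) (ht : t ≤ N) (f : Path N → β) (hf : Measurable[filt N t] f) :
    Measurable (f ∘ pad N t) ∧ f = (f ∘ pad N t) ∘ proj N t := by
  constructor
  · intro s hs
    obtain ⟨A, hA, hpre⟩ := MeasurableSpace.measurableSet_comap.mp (hf hs)
    have : (f ∘ pad N t) ⁻¹' s = A := by
      have hcomp : proj N t ∘ pad N t = id := funext fun xs => proj_pad N t ht xs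
      calc (f ∘ pad N t) ⁻¹' s = pad N t ⁻¹' (f ⁻¹' s) := rfl
        _ = pad N t ⁻¹' (proj N t ⁻¹' A) := by rw [hpre]
        _ = (proj N t ∘ pad N t) ⁻¹' A := rfl
        _ = A := by rw [hcomp, Set.preimage_id]
    rw [this]; exact hA
  · funext x
    obtain ⟨A, hA, hpre⟩ := MeasurableSpace.measurableSet_comap.mp
      (hf (MeasurableSet.singleton (f x)))
    have hx : x ∈ f ⁻¹' {f x} := rfl
    rw [← hpre] at hx
    have : pad N t (proj N t x) ∈ proj N t ⁻¹' A := by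
      simp only [Set.mem_preimage, proj_pad N t ht]; exact hx
    rw [hpre] at this
    exact this.symm

def P2 (N t : ℕ) : Path N → (Fin t → ℝ) × (Fin (N - t) → ℝ) :=
  fun x => (proj N t x, tailProj N t x)

lemma measurable_P2 (N t : ℕ) : Measurable (P2 N t) :=
  (measurable_proj N t).prodMk (measurable_tailProj N t)

section Kern
variable (N t : ℕ) (μ : Measure (Path N)) [IsProbabilityMeasure μ]

instance : IsProbabilityMeasure (μ.map (P2 N t)) :=
  Measure.isProbabilityMeasure_map (measurable_P2 N t).aemeasurable

instance : IsProbabilityMeasure (μ.map (proj N t)) :=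
  Measure.isProbabilityMeasure_map (measurable_proj N t).aemeasurable

lemma tailK_eq : tailK N μ t = (μ.map (P2 N t)).condKernel := rfl

instance markov_tailK : IsMarkovKernel (tailK N μ t) := by
  rw [tailK_eq]; infer_instance

lemma compProd_tailK : (μ.map (proj N t)) ⊗ₘ tailK N μ t = μ.map (P2 N t) := by
  have h1 : (μ.map (P2 N t)).fst = μ.map (proj N t) := by
    rw [Measure.fst, Measure.map_map measurable_fst (measurable_P2 N t)]; rfl
  rw [tailK_eq, ← h1]
  exact Measure.disintegrate _ _

end Kern

/-- conditional expectation given the first `t` coordinates, as a function on histories -/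
def condInt (N t : ℕ) (μ : Measure (Path N)) [IsFiniteMeasure μ] (g : Path N → ℝ)
    (xs : Fin t → ℝ) : ℝ :=
  ∫ z, g (glueF N t xs z) ∂(tailK N μ t xs)

lemma stronglyMeasurable_condInt (N t : ℕ) (μ : Measure (Path N)) [IsProbabilityMeasure μ]
    {g : Path N → ℝ} (hg : Measurable g) :
    StronglyMeasurable (condInt N t μ g) := by
  have : StronglyMeasurable (fun q : (Fin t → ℝ) × (Fin (N - t) → ℝ) => g (glueF N t q.1 q.2)) :=
    (hg.comp (measurable_glueF N t)).stronglyMeasurable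
  exact this.integral_kernel_prod_right'

lemma abs_condInt_le (N t : ℕ) (μ : Measure (Path N)) [IsProbabilityMeasure μ]
    {g : Path N → ℝ} {C : ℝ} (hg : ∀ x, |g x| ≤ C) (xs : Fin t → ℝ) :
    |condInt N t μ g xs| ≤ C := by
  have := norm_integral_le_of_norm_le_const (μ := tailK N μ t xs)
    (f := fun z => g (glueF N t xs z)) (C := C)
    (ae_of_all _ fun z => by simpa [Real.norm_eq_abs] using hg _)
  simpa [condInt, Real.norm_eq_abs] using this

lemma integrable_of_bound {α : Type*} [MeasurableSpace α] (P : Measure α) [IsFiniteMeasure P]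
    (f : α → ℝ) (hf : AEStronglyMeasurable f P) (C : ℝ) (hC : ∀ a, |f a| ≤ C) :
    Integrable f P :=
  ⟨hf, HasFiniteIntegral.of_bounded (C := C)
    (ae_of_all _ fun a => by simpa [Real.norm_eq_abs] using hC a)⟩

lemma L0a (N t : ℕ) (μ : Measure (Path N)) [IsProbabilityMeasure μ]
    {φ : (Fin t → ℝ) → ℝ} (hφ : Measurable φ) {Cφ : ℝ} (hφb : ∀ xs, |φ xs| ≤ Cφ)
    {g : Path N → ℝ} (hg : Measurable g) {Cg : ℝ} (hgb : ∀ x, |g x| ≤ Cg) :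
    ∫ x, φ (proj N t x) * g x ∂μ
      = ∫ xs, φ xs * condInt N t μ g xs ∂(μ.map (proj N t)) := by
  have hmeas : Measurable (fun q : (Fin t → ℝ) × (Fin (N - t) → ℝ) => φ q.1 * g (glueF N t q.1 q.2)) :=
    (hφ.comp measurable_fst).mul (hg.comp (measurable_glueF N t))
  calc ∫ x, φ (proj N t x) * g x ∂μ
      = ∫ x, (fun q : (Fin t → ℝ) × (Fin (N - t) → ℝ) => φ q.1 * g (glueF N t q.1 q.2)) (P2 N t x) ∂μ := by
        refine integral_congr_ae (ae_of_all _ fun x => ?_)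
        simp only [P2, glueF_proj_tailProj]
    _ = ∫ q, φ q.1 * g (glueF N t q.1 q.2) ∂(μ.map (P2 N t)) :=
        (integral_map (measurable_P2 N t).aemeasurable hmeas.aestronglyMeasurable).symm
    _ = ∫ q, φ q.1 * g (glueF N t q.1 q.2) ∂((μ.map (proj N t)) ⊗ₘ tailK N μ t) := by
        rw [compProd_tailK]
    _ = ∫ xs, ∫ z, φ xs * g (glueF N t xs z) ∂(tailK N μ t xs) ∂(μ.map (proj N t)) := by
        refine Measure.integral_compProd ?_
        refine integrable_of_bound _ _ ?_ (|Cφ| * |Cg|) ?_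
        · rw [compProd_tailK]; exact hmeas.aestronglyMeasurable
        · intro q
          rw [abs_mul]
          exact mul_le_mul ((hφb _).trans (le_abs_self _)) ((hgb _).trans (le_abs_self _))
            (abs_nonneg _) (abs_nonneg _)
    _ = ∫ xs, φ xs * condInt N t μ g xs ∂(μ.map (proj N t)) := by
        refine integral_congr_ae (ae_of_all _ fun xs => ?_)
        exact integral_const_mul _ _

lemma L0b (N t : ℕ) (μ : Measure (Path N)) [IsProbabilityMeasure μ]
    {φ : (Fin t → ℝ) → ℝ} (hφ : Measurable φ)
    {g : Path N → ℝ} (hg : Measurable g) :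
    ∫ x, φ (proj N t x) * condInt N t μ g (proj N t x) ∂μ
      = ∫ xs, φ xs * condInt N t μ g xs ∂(μ.map (proj N t)) := by
  exact (integral_map (measurable_proj N t).aemeasurable
    ((hφ.stronglyMeasurable.mul (stronglyMeasurable_condInt N t μ hg)).aestronglyMeasurable)).symm

lemma L1 (N t : ℕ) (μ : Measure (Path N)) [IsProbabilityMeasure μ]
    {φ : (Fin t → ℝ) → ℝ} (hφ : Measurable φ) {Cφ : ℝ} (hφb : ∀ xs, |φ xs| ≤ Cφ)
    {g : Path N → ℝ} (hg : Measurable g) {Cg : ℝ} (hgb : ∀ x, |g x| ≤ Cg) :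
    ∫ x, φ (proj N t x) * (g x - condInt N t μ g (proj N t x)) ∂μ = 0 := by
  have h1 : ∫ x, φ (proj N t x) * (g x - condInt N t μ g (proj N t x)) ∂μ
      = ∫ x, φ (proj N t x) * g x ∂μ - ∫ x, φ (proj N t x) * condInt N t μ g (proj N t x) ∂μ := by
    rw [← integral_sub]
    · refine integral_congr_ae (ae_of_all _ fun x => ?_); ring
    · exact integrable_of_bound _ _ (((hφ.comp (measurable_proj N t)).mul hg).aestronglyMeasurable)
        (|Cφ| * |Cg|) fun x => by
          rw [abs_mul]
          exact mul_le_mul ((hφb _).trans (le_abs_self _)) ((hgb _).trans (le_abs_self _))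
            (abs_nonneg _) (abs_nonneg _)
    · refine integrable_of_bound _ _ ?_ (|Cφ| * |Cg|) fun x => ?_
      · exact ((hφ.comp (measurable_proj N t)).mul
          ((stronglyMeasurable_condInt N t μ hg).measurable.comp (measurable_proj N t))).aestronglyMeasurable
      · rw [abs_mul]
        exact mul_le_mul ((hφb _).trans (le_abs_self _))
          ((abs_condInt_le N t μ hgb _).trans (le_abs_self _)) (abs_nonneg _) (abs_nonneg _)
  rw [h1, L0a N t μ hφ hφb hg hgb, L0b N t μ hφ hg, sub_self]
lemma map_withDensity' {α β : Type*} [MeasurableSpace α] [MeasurableSpace β]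
    (μ : Measure α) {f : α → β} (hf : Measurable f) {w : β → ℝ≥0∞} (hw : Measurable w) :
    (μ.map f).withDensity w = (μ.withDensity (fun a => w (f a))).map f := by
  ext s hs
  rw [withDensity_apply _ hs, setLIntegral_map hs hw hf, Measure.map_apply hf hs,
    withDensity_apply _ (hf hs)]

lemma compProd_withDensity' {α β : Type*} [MeasurableSpace α] [MeasurableSpace β]
    (μ : Measure α) [SFinite μ] (κ : Kernel α β) [IsSFiniteKernel κ]
    {w : α → ℝ≥0∞} (hw : Measurable w) (hwi : ∫⁻ a, w a ∂μ ≠ ∞) :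
    (μ.withDensity w) ⊗ₘ κ = (μ ⊗ₘ κ).withDensity (fun p => w p.1) := by
  haveI : IsFiniteMeasure (μ.withDensity w) := isFiniteMeasure_withDensity hwi
  ext s hs
  rw [Measure.compProd_apply hs,
    lintegral_withDensity_eq_lintegral_mul _ hw (Kernel.measurable_kernel_prodMk_left hs),
    withDensity_apply _ hs, ← lintegral_indicator hs]
  have hm : Measurable fun p : α × β => w p.1 := hw.comp measurable_fst
  rw [Measure.lintegral_compProd (hm.indicator hs)]
  refine lintegral_congr fun a => ?_
  have heq : ∀ b, s.indicator (fun p : α × β => w p.1) (a, b)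
      = (Prod.mk a ⁻¹' s).indicator (fun _ => w a) b := by
    intro b
    by_cases hb : (a, b) ∈ s
    · simp [Set.indicator, hb]
    · simp [Set.indicator, hb]
  simp only [Pi.mul_apply]
  rw [lintegral_congr heq, lintegral_indicator (measurable_prodMk_left hs), setLIntegral_const]

lemma ext_of_Cb {Ω : Type*} [MeasurableSpace Ω] [TopologicalSpace Ω] [HasOuterApproxClosed Ω]
    [BorelSpace Ω] (P Q : Measure Ω) [IsFiniteMeasure P] [IsFiniteMeasure Q]
    (h : ∀ f : Ω →ᵇ ℝ, ∫ x, f x ∂P = ∫ x, f x ∂Q) : P = Q := by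
  refine ext_of_forall_lintegral_eq_of_IsFiniteMeasure (fun f => ?_)
  have hcont : Continuous (fun x => ((f x : ℝ≥0) : ℝ)) := NNReal.continuous_coe.comp f.continuous
  obtain ⟨C, hC⟩ := f.bounded
  set g : Ω →ᵇ ℝ := BoundedContinuousFunction.mkOfBound ⟨fun x => ((f x : ℝ≥0) : ℝ), hcont⟩
    C (fun x y => by
      have h1 : dist ((f x : ℝ≥0) : ℝ) ((f y : ℝ≥0) : ℝ) = dist (f x) (f y) := by
        rw [NNReal.dist_eq, Real.dist_eq]
      rw [ContinuousMap.coe_mk, h1]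
      exact hC x y) with hgdef
  have hint : ∀ (R : Measure Ω) [IsFiniteMeasure R],
      Integrable (fun x => ((f x : ℝ≥0) : ℝ)) R := by
    intro R hR
    refine integrable_of_bound R _ hcont.measurable.aestronglyMeasurable ‖g‖ (fun x => ?_)
    have := g.norm_coe_le_norm x
    rw [Real.norm_eq_abs] at this
    exact this
  rw [lintegral_coe_eq_integral (fun x => f x) (hint P),
    lintegral_coe_eq_integral (fun x => f x) (hint Q)]
  exact congrArg ENNReal.ofReal (h g)
lemma finwd {α : Type*} [MeasurableSpace α] (P : Measure α) [IsFiniteMeasure P]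
    (d : α → ℝ≥0) (c : ℝ≥0) (hd : ∀ a, d a ≤ c) :
    IsFiniteMeasure (P.withDensity (fun a => (d a : ℝ≥0∞))) := by
  refine isFiniteMeasure_withDensity (ne_of_lt ?_)
  have hle : ∫⁻ a, (d a : ℝ≥0∞) ∂P ≤ ∫⁻ _, (c : ℝ≥0∞) ∂P :=
    lintegral_mono fun a => ENNReal.coe_le_coe.mpr (hd a)
  rw [lintegral_const] at hle
  exact lt_of_le_of_lt hle (ENNReal.mul_lt_top ENNReal.coe_lt_top (measure_lt_top _ _))

lemma abs_le_two_norm (N : ℕ) (g : Path N →ᵇ ℝ) (x : Path N) : |g x| ≤ ‖g‖ := by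
  have := g.norm_coe_le_norm x; rwa [Real.norm_eq_abs] at this

section StepA
variable (N t : ℕ) (μ : Measure (Path N)) [IsProbabilityMeasure μ]
  (γ : Measure (Path N × Path N)) [IsProbabilityMeasure γ]

lemma stepA
    (htest : ∀ (h : (Fin t → ℝ) →ᵇ ℝ) (g : Path N →ᵇ ℝ),
      ∫ p, h (proj N t p.2) * (g p.1 - condInt N t μ g (proj N t p.1)) ∂γ = 0)
    (A : Set (Fin t → ℝ)) (hA : MeasurableSet A) (g : Path N →ᵇ ℝ) :
    ∫ p, A.indicator (fun _ => (1:ℝ)) (proj N t p.2)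
      * (g p.1 - condInt N t μ g (proj N t p.1)) ∂γ = 0 := by
  set D : Path N × Path N → ℝ := fun p => g p.1 - condInt N t μ g (proj N t p.1) with hD
  have hgm : Measurable (g : Path N → ℝ) := g.continuous.measurable
  have hDm : Measurable D :=
    (hgm.comp measurable_fst).sub ((stronglyMeasurable_condInt N t μ hgm).measurable.comp
      ((measurable_proj N t).comp measurable_fst))
  have hDb : ∀ p, |D p| ≤ ‖g‖ + ‖g‖ := by
    intro p
    refine (abs_sub _ _).trans (add_le_add (abs_le_two_norm N g _) ?_)
    exact abs_condInt_le N t μ (fun x => abs_le_two_norm N g x) _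
  set prj2 : Path N × Path N → (Fin t → ℝ) := fun p => proj N t p.2 with hprj2
  have hprj2m : Measurable prj2 := (measurable_proj N t).comp measurable_snd
  set dP : Path N × Path N → ℝ≥0 := fun p => (D p).toNNReal with hdP
  set dM : Path N × Path N → ℝ≥0 := fun p => (-D p).toNNReal with hdM
  have hdPm : Measurable dP := hDm.real_toNNReal
  have hdMm : Measurable dM := hDm.neg.real_toNNReal
  set mP : Measure (Fin t → ℝ) := (γ.withDensity (fun p => (dP p : ℝ≥0∞))).map prj2 with hmP
  set mM : Measure (Fin t → ℝ) := (γ.withDensity (fun p => (dM p : ℝ≥0∞))).map prj2 with hmM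
  have hfinP : IsFiniteMeasure (γ.withDensity (fun p => (dP p : ℝ≥0∞))) :=
    finwd γ dP (‖g‖ + ‖g‖).toNNReal fun p =>
      Real.toNNReal_le_toNNReal (le_trans (le_abs_self _) (hDb p))
  have hfinM : IsFiniteMeasure (γ.withDensity (fun p => (dM p : ℝ≥0∞))) :=
    finwd γ dM (‖g‖ + ‖g‖).toNNReal fun p =>
      Real.toNNReal_le_toNNReal (le_trans (neg_le_abs _) (hDb p))
  haveI := hfinP; haveI := hfinM
  haveI : IsFiniteMeasure mP := Measure.isFiniteMeasure_map _ _
  haveI : IsFiniteMeasure mM := Measure.isFiniteMeasure_map _ _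
  have hcalc : ∀ (f : (Fin t → ℝ) → ℝ), Measurable f → ∀ C : ℝ, (∀ xs, |f xs| ≤ C) →
      ∫ xs, f xs ∂mP - ∫ xs, f xs ∂mM = ∫ p, f (proj N t p.2) * D p ∂γ := by
    intro f hf C hC
    have h1 : ∫ xs, f xs ∂mP = ∫ p, (dP p : ℝ) * f (prj2 p) ∂γ := by
      rw [hmP, integral_map hprj2m.aemeasurable hf.aestronglyMeasurable,
        integral_withDensity_eq_integral_smul hdPm]
      exact integral_congr_ae (ae_of_all _ fun p => by simp [NNReal.smul_def])
    have h2 : ∫ xs, f xs ∂mM = ∫ p, (dM p : ℝ) * f (prj2 p) ∂γ := by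
      rw [hmM, integral_map hprj2m.aemeasurable hf.aestronglyMeasurable,
        integral_withDensity_eq_integral_smul hdMm]
      exact integral_congr_ae (ae_of_all _ fun p => by simp [NNReal.smul_def])
    rw [h1, h2, ← integral_sub]
    · refine integral_congr_ae (ae_of_all _ fun p => ?_)
      have : (dP p : ℝ) - (dM p : ℝ) = D p := by
        rw [hdP, hdM]
        simp only [Real.coe_toNNReal']
        exact max_zero_sub_max_neg_zero_eq_self (D p)
      calc (dP p : ℝ) * f (prj2 p) - (dM p : ℝ) * f (prj2 p)
          = ((dP p : ℝ) - (dM p : ℝ)) * f (prj2 p) := by ring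
        _ = D p * f (prj2 p) := by rw [this]
        _ = f (proj N t p.2) * D p := by rw [mul_comm]
    · refine integrable_of_bound γ _ ((hdPm.coe_nnreal_real.mul (hf.comp hprj2m)).aestronglyMeasurable)
        ((‖g‖ + ‖g‖) * |C|) fun p => ?_
      rw [abs_mul]
      refine mul_le_mul ?_ ((hC _).trans (le_abs_self _)) (abs_nonneg _) (by positivity)
      rw [abs_of_nonneg (dP p).coe_nonneg, hdP, Real.coe_toNNReal']
      exact max_le ((le_abs_self _).trans (hDb p)) (by positivity)
    · refine integrable_of_bound γ _ ((hdMm.coe_nnreal_real.mul (hf.comp hprj2m)).aestronglyMeasurable)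
        ((‖g‖ + ‖g‖) * |C|) fun p => ?_
      rw [abs_mul]
      refine mul_le_mul ?_ ((hC _).trans (le_abs_self _)) (abs_nonneg _) (by positivity)
      rw [abs_of_nonneg (dM p).coe_nonneg, hdM, Real.coe_toNNReal']
      exact max_le ((neg_le_abs _).trans (hDb p)) (by positivity)
  have hmeq : mP = mM := by
    refine ext_of_Cb _ _ fun f => ?_
    have := hcalc f f.continuous.measurable ‖f‖ (fun xs => by
      have := f.norm_coe_le_norm xs; rwa [Real.norm_eq_abs] at this)
    have h0 := htest f g
    simp only [hD] at this
    rw [h0] at this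
    linarith [this]
  have hind := hcalc (A.indicator (fun _ => (1:ℝ))) (measurable_const.indicator hA) 1
    (fun xs => by by_cases h : xs ∈ A <;> simp [Set.indicator, h])
  rw [hmeq, sub_self] at hind
  exact hind.symm

end StepA
section Converse
variable (N t : ℕ) (μ : Measure (Path N)) [IsProbabilityMeasure μ]

lemma stepB (K : Kernel (Path N) (Path N)) [IsSFiniteKernel K]
    [IsProbabilityMeasure (μ ⊗ₘ K)]
    (A : Set (Fin t → ℝ)) (hA : MeasurableSet A) (B : Set (Path N)) (hBA : proj N t ⁻¹' A = B)
    {u : Path N → ℝ} (hu : Measurable u) {C : ℝ} (hub : ∀ x, |u x| ≤ C) :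
    ∫ p, A.indicator (fun _ => (1:ℝ)) (proj N t p.2) * u p.1 ∂(μ ⊗ₘ K)
      = ∫ x, (K x B).toReal * u x ∂μ := by
  have hBmeas : MeasurableSet B := hBA ▸ (measurable_proj N t hA)
  have hindm : Measurable (fun p : Path N × Path N => A.indicator (fun _ => (1:ℝ)) (proj N t p.2)) :=
    (measurable_const.indicator hA).comp ((measurable_proj N t).comp measurable_snd)
  have hint : Integrable (fun p : Path N × Path N =>
      A.indicator (fun _ => (1:ℝ)) (proj N t p.2) * u p.1) (μ ⊗ₘ K) := by
    refine integrable_of_bound _ _ (hindm.mul (hu.comp measurable_fst)).aestronglyMeasurable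
      |C| fun p => ?_
    rw [abs_mul]
    refine le_trans (mul_le_mul ?_ ((hub _).trans (le_abs_self _)) (abs_nonneg _) zero_le_one)
      (one_mul _).le
    by_cases h : proj N t p.2 ∈ A <;> simp [Set.indicator, h]
  rw [Measure.integral_compProd hint]
  refine integral_congr_ae (ae_of_all _ fun x => ?_)
  have heq : (fun y => A.indicator (fun _ => (1:ℝ)) (proj N t y)) = B.indicator (fun _ => (1:ℝ)) := by
    funext y
    have : proj N t y ∈ A ↔ y ∈ B := by rw [← hBA]; exact Iff.rfl
    by_cases h : y ∈ B
    · rw [Set.indicator_of_mem (this.mpr h), Set.indicator_of_mem h]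
    · rw [Set.indicator_of_notMem (fun hh => h (this.mp hh)), Set.indicator_of_notMem h]
  calc ∫ y, A.indicator (fun _ => (1:ℝ)) (proj N t y) * u x ∂(K x)
      = (∫ y, A.indicator (fun _ => (1:ℝ)) (proj N t y) ∂(K x)) * u x := by
        rw [integral_mul_const]
    _ = (K x B).toReal * u x := by
        rw [heq, integral_indicator_const (1:ℝ) hBmeas, smul_eq_mul, mul_one]; rfl

lemma converse_core (ht : t ≤ N)
    (γ : Measure (Path N × Path N)) [IsProbabilityMeasure γ]
    (htest : ∀ (h : (Fin t → ℝ) →ᵇ ℝ) (g : Path N →ᵇ ℝ),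
      ∫ p, h (proj N t p.2) * (g p.1 - condInt N t μ g (proj N t p.1)) ∂γ = 0)
    (K : Kernel (Path N) (Path N)) (hsf : IsSFiniteKernel K)
    (hcomp : μ ⊗ₘ K = γ) (B : Set (Path N)) (hB : MeasurableSet[filt N t] B) :
    ∃ g : Path N → ℝ≥0∞, Measurable[filt N t] g ∧ (fun x => K x B) =ᵐ[μ] g := by
  haveI := hsf
  obtain ⟨A, hA, hBA⟩ := MeasurableSpace.measurableSet_comap.mp hB
  have hBmeas : MeasurableSet B := hBA ▸ (measurable_proj N t hA)
  haveI hPP : IsProbabilityMeasure (μ ⊗ₘ K) := by rw [hcomp]; infer_instance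
  -- the key integral identity for continuous test functions on the first path
  have hdagger : ∀ g : Path N →ᵇ ℝ, ∫ x, (K x B).toReal * (g x) ∂μ
      = ∫ x, (K x B).toReal * condInt N t μ g (proj N t x) ∂μ := by
    intro g
    have hgm : Measurable (g : Path N → ℝ) := g.continuous.measurable
    have hcm : Measurable (fun x => condInt N t μ g (proj N t x)) :=
      (stronglyMeasurable_condInt N t μ hgm).measurable.comp (measurable_proj N t)
    have hSA := stepA N t μ γ htest A hA g
    rw [← hcomp] at hSA
    have hsplit1 := stepB N t μ K A hA B hBA hgm (abs_le_two_norm N g)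
    have hsplit2 := stepB N t μ K A hA B hBA hcm
      (C := ‖g‖) (fun x => abs_condInt_le N t μ (abs_le_two_norm N g) _)
    have hindm : Measurable (fun p : Path N × Path N =>
        A.indicator (fun _ => (1:ℝ)) (proj N t p.2)) :=
      (measurable_const.indicator hA).comp ((measurable_proj N t).comp measurable_snd)
    have hindb : ∀ p : Path N × Path N, |A.indicator (fun _ => (1:ℝ)) (proj N t p.2)| ≤ 1 := by
      intro p; by_cases h : proj N t p.2 ∈ A <;> simp [Set.indicator, h]
    have int1 : Integrable (fun p : Path N × Path N =>
        A.indicator (fun _ => (1:ℝ)) (proj N t p.2) * g p.1) (μ ⊗ₘ K) := by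
      refine integrable_of_bound _ _ (hindm.mul (hgm.comp measurable_fst)).aestronglyMeasurable
        ‖g‖ fun p => ?_
      rw [abs_mul]
      exact le_trans (mul_le_mul (hindb p) (abs_le_two_norm N g _) (abs_nonneg _) zero_le_one)
        (one_mul _).le
    have int2 : Integrable (fun p : Path N × Path N =>
        A.indicator (fun _ => (1:ℝ)) (proj N t p.2) * condInt N t μ g (proj N t p.1)) (μ ⊗ₘ K) := by
      refine integrable_of_bound _ _ (hindm.mul (hcm.comp measurable_fst)).aestronglyMeasurable
        ‖g‖ fun p => ?_
      rw [abs_mul]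
      exact le_trans (mul_le_mul (hindb p) (abs_condInt_le N t μ (abs_le_two_norm N g) _)
        (abs_nonneg _) zero_le_one) (one_mul _).le
    have hexp : ∫ p, A.indicator (fun _ => (1:ℝ)) (proj N t p.2)
          * (g p.1 - condInt N t μ g (proj N t p.1)) ∂(μ ⊗ₘ K)
        = ∫ p, A.indicator (fun _ => (1:ℝ)) (proj N t p.2) * g p.1 ∂(μ ⊗ₘ K)
          - ∫ p, A.indicator (fun _ => (1:ℝ)) (proj N t p.2)
              * condInt N t μ g (proj N t p.1) ∂(μ ⊗ₘ K) := by
      rw [← integral_sub int1 int2]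
      refine integral_congr_ae (ae_of_all _ fun p => ?_)
      ring
    rw [hexp, hsplit1, hsplit2] at hSA
    linarith [hSA]
  -- the density and the two measures
  set dN : Path N → ℝ≥0 := fun x => (K x B).toNNReal with hdN
  have hdNm : Measurable dN := (Kernel.measurable_coe K hBmeas).ennreal_toNNReal
  set w : Path N → ℝ≥0∞ := fun x => (dN x : ℝ≥0∞) with hw
  have hwm : Measurable w := hdNm.coe_nnreal_ennreal
  set mf : Measure (Path N) := μ.withDensity w with hmf
  have hKlt : ∫⁻ x, K x B ∂μ ≤ 1 := by
    have h1 : ∫⁻ x, K x B ∂μ ≤ ∫⁻ x, K x Set.univ ∂μ :=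
      lintegral_mono fun x => measure_mono (Set.subset_univ _)
    have h2 : (μ ⊗ₘ K) Set.univ = ∫⁻ x, K x Set.univ ∂μ := by
      rw [Measure.compProd_apply MeasurableSet.univ]
      exact lintegral_congr fun x => by simp
    rw [← h2] at h1
    simpa using h1
  have hKfin : ∀ᵐ x ∂μ, K x B < ∞ :=
    ae_lt_top (Kernel.measurable_coe K hBmeas) (ne_of_lt (lt_of_le_of_lt hKlt ENNReal.one_lt_top))
  have hKw : (fun x => K x B) =ᵐ[μ] w :=
    hKfin.mono fun x hx => by rw [hw, hdN]; exact (ENNReal.coe_toNNReal hx.ne).symm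
  have hwint : ∫⁻ x, w x ∂μ ≤ 1 := by
    rw [lintegral_congr_ae hKw.symm]; exact hKlt
  haveI hmffin : IsFiniteMeasure mf := isFiniteMeasure_withDensity
    (ne_of_lt (lt_of_le_of_lt hwint ENNReal.one_lt_top))
  have hsmul : ∀ u : Path N → ℝ, ∫ x, u x ∂mf = ∫ x, (K x B).toReal * u x ∂μ := by
    intro u
    rw [hmf, hw, integral_withDensity_eq_integral_smul hdNm u]
    refine integral_congr_ae (ae_of_all _ fun x => ?_)
    simp only [NNReal.smul_def]
    rfl
  set Φ : (Fin t → ℝ) × (Fin (N - t) → ℝ) → Path N := fun q => glueF N t q.1 q.2 with hΦ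
  haveI : IsFiniteMeasure (mf.map (proj N t)) := Measure.isFiniteMeasure_map _ _
  set m' : Measure (Path N) := ((mf.map (proj N t)) ⊗ₘ tailK N μ t).map Φ with hm'
  haveI : IsFiniteMeasure ((mf.map (proj N t)) ⊗ₘ tailK N μ t) := by infer_instance
  haveI : IsFiniteMeasure m' := Measure.isFiniteMeasure_map _ _
  have hm'int : ∀ g : Path N →ᵇ ℝ, ∫ x, g x ∂m'
      = ∫ x, condInt N t μ g (proj N t x) ∂mf := by
    intro g
    have hgm : Measurable (g : Path N → ℝ) := g.continuous.measurable
    have hgΦ : Measurable fun q : (Fin t → ℝ) × (Fin (N - t) → ℝ) => g (Φ q) :=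
      hgm.comp (measurable_glueF N t)
    rw [hm', integral_map (measurable_glueF N t).aemeasurable hgm.aestronglyMeasurable]
    rw [Measure.integral_compProd (integrable_of_bound _ _
      hgΦ.aestronglyMeasurable ‖g‖ (fun q => abs_le_two_norm N g _))]
    rw [← integral_map (measurable_proj N t).aemeasurable
      (stronglyMeasurable_condInt N t μ hgm).aestronglyMeasurable]
    rfl
  have hext : mf = m' := by
    refine ext_of_Cb _ _ fun g => ?_
    rw [hsmul g, hm'int g, hsmul (fun x => condInt N t μ g (proj N t x))]
    exact hdagger g
  -- identify m' as a measure with filt-measurable density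
  have habs : mf.map (proj N t) ≪ μ.map (proj N t) :=
    (withDensity_absolutelyContinuous μ w).map (measurable_proj N t)
  set ψ : (Fin t → ℝ) → ℝ≥0∞ := (mf.map (proj N t)).rnDeriv (μ.map (proj N t)) with hψdef
  have hψm : Measurable ψ := Measure.measurable_rnDeriv _ _
  have h1 : (μ.map (proj N t)).withDensity ψ = mf.map (proj N t) :=
    Measure.withDensity_rnDeriv_eq _ _ habs
  have hψint : ∫⁻ xs, ψ xs ∂(μ.map (proj N t)) ≠ ∞ := by
    have : ((μ.map (proj N t)).withDensity ψ) Set.univ = ∫⁻ xs, ψ xs ∂(μ.map (proj N t)) := by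
      rw [withDensity_apply _ MeasurableSet.univ, setLIntegral_univ]
    rw [← this, h1]
    exact measure_ne_top _ _
  have hψfst : Measurable fun q : (Fin t → ℝ) × (Fin (N - t) → ℝ) => ψ q.1 :=
    hψm.comp measurable_fst
  have hchain : m' = μ.withDensity (fun x => ψ (proj N t x)) := by
    calc m' = (((μ.map (proj N t)).withDensity ψ) ⊗ₘ tailK N μ t).map Φ := by rw [h1]
      _ = (((μ.map (proj N t)) ⊗ₘ tailK N μ t).withDensity (fun q => ψ q.1)).map Φ := by
          rw [compProd_withDensity' _ _ hψm hψint]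
      _ = ((μ.map (P2 N t)).withDensity (fun q => ψ q.1)).map Φ := by
          rw [compProd_tailK]
      _ = ((μ.withDensity (fun x => ψ ((P2 N t x).1))).map (P2 N t)).map Φ := by
          rw [map_withDensity' μ (measurable_P2 N t) hψfst]
      _ = (μ.withDensity (fun x => ψ (proj N t x))).map (fun x => Φ (P2 N t x)) := by
          rw [Measure.map_map (measurable_glueF N t) (measurable_P2 N t)]
          rfl
      _ = μ.withDensity (fun x => ψ (proj N t x)) := by
          have hid : (fun x => Φ (P2 N t x)) = id := by
            funext x
            exact glueF_proj_tailProj N t x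
          rw [hid, Measure.map_id]
  have hfinal : w =ᵐ[μ] fun x => ψ (proj N t x) := by
    have hψpm : Measurable fun x => ψ (proj N t x) := hψm.comp (measurable_proj N t)
    refine (withDensity_eq_iff_of_sigmaFinite hwm.aemeasurable hψpm.aemeasurable).mp ?_
    rw [← hmf, ← hchain, hext]
  exact ⟨fun x => ψ (proj N t x), measurable_comp_proj N t hψm, hKw.trans hfinal⟩

end Converse
section Forward
variable (N t : ℕ) (μ : Measure (Path N)) [IsProbabilityMeasure μ]

lemma abs_le_norm' {α : Type*} [TopologicalSpace α] (f : α →ᵇ ℝ) (x : α) : |f x| ≤ ‖f‖ := by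
  have := f.norm_coe_le_norm x; rwa [Real.norm_eq_abs] at this

lemma forward_version (K : Kernel (Path N) (Path N)) [IsSFiniteKernel K]
    (hB : ∀ B : Set (Path N), MeasurableSet[filt N t] B →
      ∃ g : Path N → ℝ≥0∞, Measurable[filt N t] g ∧ (fun x => K x B) =ᵐ[μ] g)
    {f : Path N → ℝ≥0∞} (hf : Measurable[filt N t] f) :
    ∃ φ : Path N → ℝ≥0∞, Measurable[filt N t] φ ∧
      (fun x => ∫⁻ y, f y ∂(K x)) =ᵐ[μ] φ := by
  refine @Measurable.ennreal_induction (Path N) (filt N t)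
    (fun f => ∃ φ : Path N → ℝ≥0∞, Measurable[filt N t] φ ∧
      (fun x => ∫⁻ y, f y ∂(K x)) =ᵐ[μ] φ) ?_ ?_ ?_ f hf
  · intro c s hs
    obtain ⟨gs, hgs, hae⟩ := hB s hs
    refine ⟨fun x => c * gs x, hgs.const_mul c, hae.mono fun x hx => ?_⟩
    simp only
    rw [lintegral_indicator_const (filt_le N t s hs) c, show (K x) s = gs x from hx]
  · rintro f g _ hfm hgm ⟨φf, hφf, haef⟩ ⟨φg, hφg, haeg⟩
    refine ⟨fun x => φf x + φg x, hφf.add hφg, ?_⟩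
    filter_upwards [haef, haeg] with x hxf hxg
    simp only [Pi.add_apply]
    rw [lintegral_add_left (hfm.mono (filt_le N t) le_rfl), hxf, hxg]
  · rintro f hfm hmono ih
    choose φ hφm hae using ih
    refine ⟨fun x => ⨆ n, φ n x, ?_, ?_⟩
    · exact Measurable.iSup hφm
    · filter_upwards [ae_all_iff.mpr hae] with x hx
      rw [lintegral_iSup (fun n => (hfm n).mono (filt_le N t) le_rfl) hmono]
      exact iSup_congr hx

lemma forward_core (ht : t ≤ N) (K : Kernel (Path N) (Path N)) [IsMarkovKernel K]
    (hB : ∀ B : Set (Path N), MeasurableSet[filt N t] B →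
      ∃ g : Path N → ℝ≥0∞, Measurable[filt N t] g ∧ (fun x => K x B) =ᵐ[μ] g)
    (h : (Fin t → ℝ) →ᵇ ℝ) (g : Path N →ᵇ ℝ) :
    ∫ x, (g x - condInt N t μ g (proj N t x)) * (∫ y, h (proj N t y) ∂(K x)) ∂μ = 0 := by
  set c : ℝ := ‖h‖ with hc
  have hc0 : 0 ≤ c := norm_nonneg _
  have hhm : Measurable (h : (Fin t → ℝ) → ℝ) := h.continuous.measurable
  have hgm : Measurable (g : Path N → ℝ) := g.continuous.measurable
  set f : Path N → ℝ≥0∞ := fun y => ENNReal.ofReal (h (proj N t y) + c) with hf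
  have hfm : Measurable[filt N t] f := by
    have h1 : Measurable[filt N t] fun y => h (proj N t y) + c :=
      (hhm.comp (measurable_filt_proj N t)).add (@measurable_const ℝ _ _ (filt N t) c)
    exact h1.ennreal_ofReal
  obtain ⟨φ, hφm, hae⟩ := forward_version N t μ K hB hfm
  set H : Path N → ℝ := fun x => ∫ y, h (proj N t y) ∂(K x) with hH
  have hHb : ∀ x, |H x| ≤ c := by
    intro x
    have := norm_integral_le_of_norm_le_const (μ := K x)
      (f := fun y => h (proj N t y)) (C := c)
      (ae_of_all _ fun y => by rw [Real.norm_eq_abs]; exact abs_le_norm' h _)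
    rwa [Real.norm_eq_abs, probReal_univ, mul_one] at this
  have hpoint : ∀ x, H x = (∫⁻ y, f y ∂(K x)).toReal - c := by
    intro x
    have hnn : ∀ y, 0 ≤ h (proj N t y) + c := fun y => by
      have := abs_le_norm' h (proj N t y); rw [abs_le] at this; linarith [this.1]
    have hm1 : Measurable fun y => h (proj N t y) := hhm.comp (measurable_proj N t)
    have hm2 : Measurable fun y => h (proj N t y) + c := hm1.add_const c
    have h1 : ∫ y, (h (proj N t y) + c) ∂(K x) = (∫⁻ y, f y ∂(K x)).toReal := by
      rw [integral_eq_lintegral_of_nonneg_ae (ae_of_all _ hnn) hm2.aestronglyMeasurable]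
    have h2 : ∫ y, (h (proj N t y) + c) ∂(K x) = H x + c := by
      rw [integral_add (integrable_of_bound _ _ hm1.aestronglyMeasurable c
        (fun y => abs_le_norm' h _)) (integrable_const c), integral_const]
      simp [measure_univ]; rfl
    rw [← h1, h2]; ring
  set φ' : Path N → ℝ := fun x => max (-c) (min ((φ x).toReal - c) c) with hφ'
  have hφ'm : Measurable[filt N t] φ' := by
    have h1 : Measurable[filt N t] fun x => (φ x).toReal - c :=
      hφm.ennreal_toReal.sub (@measurable_const ℝ _ _ (filt N t) c)
    exact (@measurable_const ℝ _ _ (filt N t) (-c)).max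
      (h1.min (@measurable_const ℝ _ _ (filt N t) c))
  have hHφ' : H =ᵐ[μ] φ' := by
    filter_upwards [hae] with x hx
    have h1 : H x = (φ x).toReal - c := by rw [hpoint x, hx]
    rw [hφ']
    simp only
    rw [← h1, min_eq_left ((abs_le.mp (hHb x)).2), max_eq_right ((abs_le.mp (hHb x)).1)]
  obtain ⟨hFm, hFeq⟩ := exists_factor N t ht φ' hφ'm
  have hFb : ∀ xs, |(φ' ∘ pad N t) xs| ≤ c := by
    intro xs
    rw [abs_le]
    constructor
    · exact le_max_left _ _
    · exact max_le (neg_le_self hc0) (min_le_right _ _)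
  have hL1 := L1 N t μ hFm hFb hgm (fun x => abs_le_norm' g x)
  calc ∫ x, (g x - condInt N t μ g (proj N t x)) * H x ∂μ
      = ∫ x, (φ' ∘ pad N t) (proj N t x) * (g x - condInt N t μ g (proj N t x)) ∂μ := by
        refine integral_congr_ae ?_
        filter_upwards [hHφ'] with x hx
        rw [hx, mul_comm]
        conv_lhs => rw [hFeq]
        rfl
    _ = 0 := hL1

end Forward

lemma glueInt_eq (N t : ℕ) (μ : Measure (Path N)) [IsProbabilityMeasure μ]
    (g : Path N → ℝ) (x : Path N) :
    ∫ z, g (glue N t x z) ∂(tailK N μ t (proj N t x)) = condInt N t μ g (proj N t x) := by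
  simp_rw [glue_eq]; rfl

theorem test_function_characterization_of_causality
    (N : ℕ) (μ ν : Measure (Path N)) [IsProbabilityMeasure μ] [IsProbabilityMeasure ν]
    (γ : Measure (Path N × Path N)) [IsProbabilityMeasure γ] :
    IsCausal N μ ν γ ↔
      (IsCoupling μ ν γ ∧
        ∀ (t : ℕ), 1 ≤ t → t ≤ N →
          ∀ (h : (Fin t → ℝ) →ᵇ ℝ) (g : Path N →ᵇ ℝ),
            ∫ p, h (proj N t p.2) *
              (g p.1 - ∫ z, g (glue N t p.1 z) ∂(tailK N μ t (proj N t p.1))) ∂γ = 0) := by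
  constructor
  · rintro ⟨hcoup, hcausal⟩
    refine ⟨hcoup, fun t ht1 ht2 h g => ?_⟩
    set K := γ.condKernel with hK
    haveI : IsMarkovKernel K := by rw [hK]; infer_instance
    have hfst : γ.fst = μ := hcoup.1
    have hcomp : μ ⊗ₘ K = γ := by rw [← hfst, hK]; exact Measure.disintegrate γ _
    have hB := hcausal K inferInstance hcomp t ht1 ht2
    haveI : IsProbabilityMeasure (μ ⊗ₘ K) := by rw [hcomp]; infer_instance
    have hhm : Measurable (h : (Fin t → ℝ) → ℝ) := h.continuous.measurable
    have hgm : Measurable (g : Path N → ℝ) := g.continuous.measurable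
    have hcm : Measurable (fun x => condInt N t μ g (proj N t x)) :=
      (stronglyMeasurable_condInt N t μ hgm).measurable.comp (measurable_proj N t)
    have hrw : ∀ p : Path N × Path N,
        h (proj N t p.2) * (g p.1 - ∫ z, g (glue N t p.1 z) ∂(tailK N μ t (proj N t p.1)))
          = h (proj N t p.2) * (g p.1 - condInt N t μ g (proj N t p.1)) := fun p => by
      rw [glueInt_eq]
    have hint : Integrable (fun p : Path N × Path N =>
        h (proj N t p.2) * (g p.1 - condInt N t μ g (proj N t p.1))) (μ ⊗ₘ K) := by
      refine integrable_of_bound _ _ ?_ (‖h‖ * (‖g‖ + ‖g‖)) ?_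
      · exact ((hhm.comp ((measurable_proj N t).comp measurable_snd)).mul
          ((hgm.comp measurable_fst).sub (hcm.comp measurable_fst))).aestronglyMeasurable
      · intro p
        rw [abs_mul]
        refine mul_le_mul (abs_le_norm' h _) ?_ (abs_nonneg _) (norm_nonneg _)
        refine (abs_sub _ _).trans (add_le_add (abs_le_norm' g _) ?_)
        exact abs_condInt_le N t μ (fun x => abs_le_norm' g x) _
    have e1 : ∫ p, h (proj N t p.2)
          * (g p.1 - ∫ z, g (glue N t p.1 z) ∂(tailK N μ t (proj N t p.1))) ∂γ
        = ∫ p, h (proj N t p.2) * (g p.1 - condInt N t μ g (proj N t p.1)) ∂(μ ⊗ₘ K) := by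
      rw [hcomp]
      exact integral_congr_ae (ae_of_all _ hrw)
    have e2 : ∫ p, h (proj N t p.2) * (g p.1 - condInt N t μ g (proj N t p.1)) ∂(μ ⊗ₘ K)
        = ∫ x, (g x - condInt N t μ g (proj N t x)) * (∫ y, h (proj N t y) ∂(K x)) ∂μ := by
      rw [Measure.integral_compProd hint]
      refine integral_congr_ae (ae_of_all _ fun x => ?_)
      simp only
      rw [integral_mul_const, mul_comm]
    rw [e1, e2]
    exact forward_core N t μ (by omega) K hB h g
  · rintro ⟨hcoup, htest⟩
    refine ⟨hcoup, fun K hsf hcomp t ht1 ht2 B hB => ?_⟩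
    refine converse_core N t μ (by omega) γ ?_ K hsf hcomp B hB
    intro h g
    have := htest t ht1 ht2 h g
    simp_rw [glueInt_eq N t μ] at this
    exact this


end CausalTransport
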